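/- Let G be a group and A an abelian maximal subgroup of G with Z(G) ≤ A. If A is not normal in G, then for every x ∈ G \ N_G(A), the intersection A ∩ x⁻¹Ax is contained in the center Z(G). (Key step: A ∪ x⁻¹Ax is contained in the centralizer of A ∩ x⁻¹Ax, which by maximality of A must be all of G.) -/

import Mathlib

/-- If `A` is an abelian maximal subgroup of a group `G` with `Z(G) ≤ A`
and `A` not normal, then for any `x ∉ N_G(A)` one has `A ∩ x⁻¹Ax ≤ Z(G)`. -/
theorem stmt_4 {G : Type*} [Group G]
    (A : Subgroup G) (hmax : IsCoatom A)
    (habel : ∀ a ∈ A, ∀ b ∈ A, a * b = b * a)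
    (hZ : Subgroup.center G ≤ A)
    (hnotnormal : ¬ A.Normal) :
    ∀ x : G, x ∉ Subgroup.normalizer (A : Set G) →
      ∀ u : G, u ∈ A → x * u * x⁻¹ ∈ A → u ∈ Subgroup.center G := by
  intro x hx u hu hv
  set v := x * u * x⁻¹ with hvdef
  set Cu := Subgroup.centralizer ({u} : Set G) with hCu
  set Cv := Subgroup.centralizer ({v} : Set G) with hCv
  have memCu : ∀ g : G, g ∈ Cu ↔ u * g = g * u := by
    intro g; simp [hCu, Subgroup.mem_centralizer_iff]
  have memCv : ∀ g : G, g ∈ Cv ↔ v * g = g * v := by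
    intro g; simp [hCv, Subgroup.mem_centralizer_iff]
  have hAu : A ≤ Cu := fun a ha => (memCu a).2 (habel u hu a ha)
  have hAv : A ≤ Cv := fun a ha => (memCv a).2 (habel v hv a ha)
  by_cases htop : Cu = ⊤
  · rw [Subgroup.mem_center_iff]
    intro g
    have : g ∈ Cu := htop ▸ Subgroup.mem_top g
    exact ((memCu g).1 this).symm
  · have hCuA : Cu = A := by
      rcases lt_or_eq_of_le hAu with h | h
      · exact absurd (hmax.2 _ h) htop
      · exact h.symm
    -- then x⁻¹ A x ≤ A
    have hconj1 : ∀ a ∈ A, x⁻¹ * a * x ∈ A := by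
      intro a ha
      have hcom : v * a = a * v := habel v hv a ha
      have : u * (x⁻¹ * a * x) = (x⁻¹ * a * x) * u := by
        have := congrArg (fun g => x⁻¹ * g * x) hcom
        simp only [hvdef] at this
        group at this ⊢
        convert this using 1 <;> group
      rw [← hCuA]
      exact (memCu _).2 this
    by_cases htop' : Cv = ⊤
    · have hvcen : v ∈ Subgroup.center G := by
        rw [Subgroup.mem_center_iff]
        intro g
        have : g ∈ Cv := htop' ▸ Subgroup.mem_top g
        exact ((memCv g).1 this).symm
      have hux : v * x = x * v := ((Subgroup.mem_center_iff.1 hvcen) x).symm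
      have : u = v := by
        have : x * u = v * x := by rw [hvdef]; group
        rw [hux] at this
        exact mul_left_cancel this
      rw [this]; exact hvcen
    · have hCvA : Cv = A := by
        rcases lt_or_eq_of_le hAv with h | h
        · exact absurd (hmax.2 _ h) htop'
        · exact h.symm
      have hconj2 : ∀ a ∈ A, x * a * x⁻¹ ∈ A := by
        intro a ha
        have hcom : u * a = a * u := habel u hu a ha
        have : v * (x * a * x⁻¹) = (x * a * x⁻¹) * v := by
          have := congrArg (fun g => x * g * x⁻¹) hcom
          simp only [hvdef]
          group at this ⊢
          convert this using 1 <;> group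
        rw [← hCvA]
        exact (memCv _).2 this
      exact absurd (Subgroup.mem_normalizer_iff.2 (fun h => ⟨fun hh => hconj2 h hh,
        fun hh => by
          have := hconj1 _ hh
          simpa [mul_assoc] using this⟩)) hx
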